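/- If (X,Y) is reverse (p,q)-hypercontractive with p < 1, p ≠ 0 and p ≤ q ≤ 1 (i.e., ‖E[g(Y)|X]‖_p ≥ ‖g(Y)‖_q for all nonnegative g), then ρ_m(X;Y)² ≤ (q-1)/(p-1) = (1-q)/(1-p). -/

import Mathlib

open Finset Real

noncomputable def fexp {Ω : Type*} [Fintype Ω] (w : Ω → ℝ) (f : Ω → ℝ) : ℝ :=
  ∑ ω, w ω * f ω

def IsProbWeight {Ω : Type*} [Fintype Ω] (w : Ω → ℝ) : Prop :=
  (∀ ω, 0 ≤ w ω) ∧ ∑ ω, w ω = 1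

noncomputable def maxCorr {Ω A B : Type*} [Fintype Ω] (w : Ω → ℝ)
    (X : Ω → A) (Y : Ω → B) : ℝ :=
  sSup { r : ℝ | ∃ f : A → ℝ, ∃ g : B → ℝ,
    fexp w (fun ω => f (X ω)) = 0 ∧ fexp w (fun ω => g (Y ω)) = 0 ∧
    fexp w (fun ω => (f (X ω))^2) ≤ 1 ∧ fexp w (fun ω => (g (Y ω))^2) ≤ 1 ∧
    r = fexp w (fun ω => f (X ω) * g (Y ω)) }

noncomputable def condExpOn {Ω A : Type*} [Fintype Ω] [DecidableEq A]
    (w : Ω → ℝ) (X : Ω → A) (h : Ω → ℝ) (ω : Ω) : ℝ :=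
  (∑ ωp, if X ωp = X ω then w ωp * h ωp else 0) / (∑ ωp, if X ωp = X ω then w ωp else 0)

noncomputable def pnorm {Ω : Type*} [Fintype Ω] (w : Ω → ℝ) (p : ℝ) (W : Ω → ℝ) : ℝ :=
  if p ≤ 0 ∧ ∃ ω, 0 < w ω ∧ W ω = 0 then 0
  else if p = 0 then Real.exp (fexp w (fun ω => Real.log |W ω|))
  else (fexp w (fun ω => |W ω| ^ p)) ^ (1 / p)


open Filter Topology

/-- second-order slope limit via L'Hopital -/
lemma lim2 {f f' : ℝ → ℝ} {c : ℝ}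
    (hf : ∀ᶠ x in 𝓝[≠] (0:ℝ), HasDerivAt f (f' x) x)
    (hf' : HasDerivAt f' c 0) (h0 : Tendsto f (𝓝[≠] (0:ℝ)) (𝓝 0)) (h0' : f' 0 = 0) :
    Tendsto (fun x => f x / x ^ 2) (𝓝[≠] (0:ℝ)) (𝓝 (c / 2)) := by
  apply HasDerivAt.lhopital_zero_nhdsNE (g' := fun x => 2 * x) hf
  · exact Eventually.of_forall fun x => by simpa using hasDerivAt_pow 2 x
  · exact eventually_mem_nhdsWithin.mono (by intro x hx; simp at hx ⊢; exact hx)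
  · exact h0
  · exact tendsto_nhdsWithin_of_tendsto_nhds (by
      have : Tendsto (fun x : ℝ => x ^ 2) (𝓝 0) (𝓝 (0 ^ 2)) := (continuous_pow 2).tendsto 0
      simpa using this)
  · have hs := hasDerivAt_iff_tendsto_slope.mp hf'
    have := hs.div_const 2
    apply this.congr'
    filter_upwards [eventually_mem_nhdsWithin] with x hx
    simp only [Set.mem_compl_iff, Set.mem_singleton_iff] at hx
    rw [slope_def_field, h0']
    field_simp
    ring

lemma ev_pos (t : ℝ) : ∀ᶠ ε in 𝓝 (0:ℝ), 0 < 1 + ε * t := by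
  have h : Tendsto (fun ε : ℝ => 1 + ε * t) (𝓝 0) (𝓝 (1 + 0 * t)) := by
    exact (tendsto_id.mul_const t).const_add 1
  simp only [zero_mul, add_zero] at h
  exact h.eventually (eventually_gt_nhds one_pos)

lemma hd_base (t s ε : ℝ) (h : 0 < 1 + ε * t) :
    HasDerivAt (fun x => (1 + x * t) ^ s) (s * (1 + ε * t) ^ (s - 1) * t) ε := by
  have h1 : HasDerivAt (fun x : ℝ => 1 + x * t) t ε := by
    simpa using ((hasDerivAt_id ε).mul_const t).const_add 1
  have h2 := (Real.hasDerivAt_rpow_const (x := 1 + ε * t) (p := s) (Or.inl h.ne')).comp ε h1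
  simpa [Function.comp_def, mul_comm, mul_assoc, mul_left_comm] using h2

lemma key_lim (r t : ℝ) :
    Tendsto (fun ε => ((1 + ε * t) ^ r - (1 + r * (ε * t))) / ε ^ 2) (𝓝[≠] (0:ℝ))
      (𝓝 (r * (r - 1) * t ^ 2 / 2)) := by
  have hf' : HasDerivAt (fun ε => r * (1 + ε * t) ^ (r - 1) * t - r * t)
      (r * (r - 1) * t ^ 2) 0 := by
    have h1 := (hd_base t (r - 1) 0 (by norm_num)).const_mul r |>.mul_const t
    have h2 := h1.sub_const (r * t)
    exact h2.congr_deriv (by simp [Real.one_rpow]; ring)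
  apply lim2 (f' := fun ε => r * (1 + ε * t) ^ (r - 1) * t - r * t) _ hf'
  · have hc : Tendsto (fun ε => (1 + ε * t) ^ r - (1 + r * (ε * t))) (𝓝 (0:ℝ))
        (𝓝 ((1 + 0 * t) ^ r - (1 + r * (0 * t)))) := by
      have hd := (hd_base t r 0 (by norm_num)).sub
        (((((hasDerivAt_id (0:ℝ)).mul_const t).const_mul r).const_add 1))
      exact hd.continuousAt.tendsto
    simp only [zero_mul, add_zero, Real.one_rpow, mul_zero, sub_self] at hc
    exact tendsto_nhdsWithin_of_tendsto_nhds hc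
  · simp [Real.one_rpow]
  · filter_upwards [nhdsWithin_le_nhds (ev_pos t)] with ε hε
    have hd := (hd_base t r ε hε).sub
      ((((hasDerivAt_id ε).mul_const t).const_mul r).const_add 1)
    exact hd.congr_deriv (by ring)

lemma key_lim_log (t : ℝ) :
    Tendsto (fun ε => (Real.log (1 + ε * t) - ε * t) / ε ^ 2) (𝓝[≠] (0:ℝ))
      (𝓝 (-(t ^ 2) / 2)) := by
  have hdl : ∀ ε : ℝ, 0 < 1 + ε * t →
      HasDerivAt (fun x => Real.log (1 + x * t) - x * t) (t / (1 + ε * t) - t) ε := by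
    intro ε hε
    have h1 : HasDerivAt (fun x : ℝ => 1 + x * t) t ε := by
      simpa using ((hasDerivAt_id ε).mul_const t).const_add 1
    have h2 := (Real.hasDerivAt_log hε.ne').comp ε h1
    have h3 : HasDerivAt (fun x : ℝ => x * t) t ε := by
      simpa using (hasDerivAt_id ε).mul_const t
    have := h2.sub h3
    exact this.congr_deriv (by ring)
  have hf' : HasDerivAt (fun ε => t / (1 + ε * t) - t) (-(t ^ 2)) 0 := by
    have h1 : HasDerivAt (fun x : ℝ => 1 + x * t) t 0 := by
      simpa using ((hasDerivAt_id (0:ℝ)).mul_const t).const_add 1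
    have h2 : HasDerivAt (fun x : ℝ => t / (1 + x * t)) (-(t * t) / (1 + 0 * t) ^ 2) 0 := by
      have := (hasDerivAt_const (0:ℝ) t).div h1 (by norm_num : (1:ℝ) + 0 * t ≠ 0)
      exact this.congr_deriv (by ring)
    have := h2.sub_const t
    exact this.congr_deriv (by norm_num; ring)
  apply lim2 (f' := fun ε => t / (1 + ε * t) - t) _ hf'
  · have hc := (hdl 0 (by norm_num)).continuousAt.tendsto
    simp only [zero_mul, add_zero, Real.log_one, sub_zero, sub_self] at hc
    exact tendsto_nhdsWithin_of_tendsto_nhds hc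
  · norm_num
  · filter_upwards [nhdsWithin_le_nhds (ev_pos t)] with ε hε
    exact hdl ε hε

section aux
variable {Ω A : Type*} [Fintype Ω] [Fintype A] [DecidableEq A]
variable {w : Ω → ℝ} {X : Ω → A}

lemma fexp_congr_support {f f' : Ω → ℝ} (h : ∀ ω, w ω ≠ 0 → f ω = f' ω) :
    fexp w f = fexp w f' := by
  refine Finset.sum_congr rfl fun ω _ => ?_
  by_cases hω : w ω = 0
  · simp [hω]
  · rw [h ω hω]

/-- fiberwise regrouping -/
lemma sum_fiber (G : Ω → ℝ) (φ : A → ℝ) :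
    ∑ ω, G ω * φ (X ω) = ∑ a, (∑ ω, if X ω = a then G ω else 0) * φ a := by
  simp only [Finset.sum_mul, ite_mul, zero_mul]
  rw [Finset.sum_comm]
  refine Finset.sum_congr rfl fun ω _ => ?_
  rw [Finset.sum_ite_eq Finset.univ (X ω) (fun a => G ω * φ a)]
  simp

lemma den_zero_num_zero (hw0 : ∀ ω, 0 ≤ w ω) (h : Ω → ℝ) (a : A)
    (hd : (∑ ω, if X ω = a then w ω else 0) = 0) :
    (∑ ω, if X ω = a then w ω * h ω else 0) = 0 := by
  have hz : ∀ ω ∈ Finset.univ, (if X ω = a then w ω else 0) = 0 :=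
    (Finset.sum_eq_zero_iff_of_nonneg (fun ω _ => by by_cases hx : X ω = a <;> simp [hx, hw0 ω])).mp hd
  refine Finset.sum_eq_zero fun ω _ => ?_
  have := hz ω (Finset.mem_univ ω)
  by_cases hx : X ω = a <;> simp [hx] at this ⊢
  simp [this]

/-- tower property -/
lemma tower (hw0 : ∀ ω, 0 ≤ w ω) (f : A → ℝ) (h : Ω → ℝ) :
    fexp w (fun ω => f (X ω) * condExpOn w X h ω) = fexp w (fun ω => f (X ω) * h ω) := by
  unfold fexp condExpOn
  have l1 : ∑ ω, w ω * (f (X ω) * ((∑ ωp, if X ωp = X ω then w ωp * h ωp else 0) /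
      (∑ ωp, if X ωp = X ω then w ωp else 0)))
      = ∑ a, (∑ ω, if X ω = a then w ω else 0) *
        (f a * ((∑ ωp, if X ωp = a then w ωp * h ωp else 0) /
          (∑ ωp, if X ωp = a then w ωp else 0))) := by
    exact sum_fiber w (fun a => f a * ((∑ ωp, if X ωp = a then w ωp * h ωp else 0) /
      (∑ ωp, if X ωp = a then w ωp else 0)))
  have l2 : ∑ ω, w ω * (f (X ω) * h ω) = ∑ a, (∑ ω, if X ω = a then w ω * h ω else 0) * f a := by
    have := sum_fiber (X := X) (fun ω => w ω * h ω) f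
    rw [← this]
    refine Finset.sum_congr rfl fun ω _ => by ring
  rw [l1, l2]
  refine Finset.sum_congr rfl fun a _ => ?_
  by_cases hd : (∑ ωp, if X ωp = a then w ωp else 0) = 0
  · rw [hd, den_zero_num_zero hw0 h a hd]
    simp
  · field_simp

lemma condExpOn_bound (hw0 : ∀ ω, 0 ≤ w ω) {h : Ω → ℝ} {M : ℝ} (hM : 0 ≤ M)
    (hb : ∀ ω, |h ω| ≤ M) (ω : Ω) : |condExpOn w X h ω| ≤ M := by
  unfold condExpOn
  set den := ∑ ωp, if X ωp = X ω then w ωp else 0 with hden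
  have hdnn : 0 ≤ den := Finset.sum_nonneg fun ωp _ => by by_cases hx : X ωp = X ω <;> simp [hx, hw0 ωp]
  rcases eq_or_lt_of_le hdnn with hd0 | hdpos
  · rw [den_zero_num_zero hw0 h (X ω) hd0.symm]
    simpa using hM
  · rw [abs_div, abs_of_pos hdpos, div_le_iff₀ hdpos]
    calc |∑ ωp, if X ωp = X ω then w ωp * h ωp else 0|
        ≤ ∑ ωp, |if X ωp = X ω then w ωp * h ωp else 0| := Finset.abs_sum_le_sum_abs _ _
      _ ≤ ∑ ωp, (if X ωp = X ω then w ωp else 0) * M := by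
          refine Finset.sum_le_sum fun ωp _ => ?_
          by_cases hx : X ωp = X ω <;> simp [hx, abs_mul, abs_of_nonneg (hw0 ωp)]
          exact mul_le_mul_of_nonneg_left (hb ωp) (hw0 ωp)
      _ = M * den := by rw [← Finset.sum_mul]; ring

lemma condExpOn_affine (hw0 : ∀ ω, 0 ≤ w ω) (h : Ω → ℝ) (ε : ℝ) (ω : Ω) (hω : 0 < w ω) :
    condExpOn w X (fun ωp => 1 + ε * h ωp) ω = 1 + ε * condExpOn w X h ω := by
  unfold condExpOn
  set den := ∑ ωp, if X ωp = X ω then w ωp else 0 with hden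
  have hdpos : 0 < den := by
    refine Finset.sum_pos' (fun ωp _ => by by_cases hx : X ωp = X ω <;> simp [hx, hw0 ωp]) ⟨ω, Finset.mem_univ ω, by simp [hω]⟩
  have hnum : (∑ ωp, if X ωp = X ω then w ωp * (1 + ε * h ωp) else 0)
      = den + ε * ∑ ωp, if X ωp = X ω then w ωp * h ωp else 0 := by
    rw [hden, Finset.mul_sum, ← Finset.sum_add_distrib]
    refine Finset.sum_congr rfl fun ωp _ => ?_
    by_cases hx : X ωp = X ω <;> simp [hx] <;> ring
  rw [hnum]
  field_simp

end aux

section pn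
variable {Ω : Type*} [Fintype Ω] {w : Ω → ℝ} {r : ℝ} {W : Ω → ℝ}

lemma fexp_congr_support' {f f' : Ω → ℝ} (h : ∀ ω, w ω ≠ 0 → f ω = f' ω) :
    fexp w f = fexp w f' := by
  refine Finset.sum_congr rfl fun ω _ => ?_
  by_cases hω : w ω = 0
  · simp [hω]
  · rw [h ω hω]

lemma fexp_pos (hw : IsProbWeight w) {V : Ω → ℝ} (hpos : ∀ ω, 0 < V ω) : 0 < fexp w V := by
  obtain ⟨ω, hω⟩ := Finset.exists_ne_zero_of_sum_ne_zero (by rw [hw.2]; norm_num)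
  exact Finset.sum_pos' (fun ωp _ => mul_nonneg (hw.1 ωp) (hpos ωp).le)
    ⟨ω, Finset.mem_univ ω, mul_pos ((hw.1 ω).lt_of_ne (Ne.symm hω.2)) (hpos ω)⟩

lemma pnorm_congr_support (hw0 : ∀ ω, 0 ≤ w ω) {W W' : Ω → ℝ}
    (h : ∀ ω, 0 < w ω → W ω = W' ω) : pnorm w r W = pnorm w r W' := by
  have hiff : (∃ ω, 0 < w ω ∧ W ω = 0) ↔ (∃ ω, 0 < w ω ∧ W' ω = 0) := by
    constructor <;> rintro ⟨ω, h1, h2⟩ <;> exact ⟨ω, h1, by rw [← h2, h ω h1]⟩ <;> skip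
  have hsupp : ∀ ω, w ω ≠ 0 → W ω = W' ω := fun ω hω => h ω ((hw0 ω).lt_of_ne (Ne.symm hω))
  have e1 : fexp w (fun ω => Real.log |W ω|) = fexp w (fun ω => Real.log |W' ω|) :=
    fexp_congr_support' fun ω hω => by rw [hsupp ω hω]
  have e2 : fexp w (fun ω => |W ω| ^ r) = fexp w (fun ω => |W' ω| ^ r) :=
    fexp_congr_support' fun ω hω => by rw [hsupp ω hω]
  unfold pnorm
  rw [e1, e2, if_congr (and_congr Iff.rfl hiff) rfl rfl]

lemma pnorm_eq_of_pos (hr : r ≠ 0) (hpos : ∀ ω, 0 < W ω) :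
    pnorm w r W = (fexp w fun ω => W ω ^ r) ^ (1 / r) := by
  unfold pnorm
  rw [if_neg (fun h => (hpos h.2.choose).ne' h.2.choose_spec.2), if_neg hr]
  congr 1
  exact Finset.sum_congr rfl fun ω _ => by simp only []; rw [abs_of_pos (hpos ω)]

lemma pnorm_zero_of_pos (hpos : ∀ ω, 0 < W ω) :
    pnorm w 0 W = Real.exp (fexp w fun ω => Real.log (W ω)) := by
  unfold pnorm
  rw [if_neg (fun h => (hpos h.2.choose).ne' h.2.choose_spec.2), if_pos rfl]
  congr 1
  exact Finset.sum_congr rfl fun ω _ => by simp only []; rw [abs_of_pos (hpos ω)]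

lemma pnorm_pos (hw : IsProbWeight w) (hpos : ∀ ω, 0 < W ω) : 0 < pnorm w r W := by
  by_cases hr : r = 0
  · rw [hr, pnorm_zero_of_pos hpos]; exact Real.exp_pos _
  · rw [pnorm_eq_of_pos hr hpos]
    exact Real.rpow_pos_of_pos (fexp_pos hw fun ω => Real.rpow_pos_of_pos (hpos ω) r) _

lemma log_pnorm (hw : IsProbWeight w) (hr : r ≠ 0) (hpos : ∀ ω, 0 < W ω) :
    Real.log (pnorm w r W) = (1 / r) * Real.log (fexp w fun ω => W ω ^ r) := by
  rw [pnorm_eq_of_pos hr hpos,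
    Real.log_rpow (fexp_pos hw fun ω => Real.rpow_pos_of_pos (hpos ω) r)]

end pn

noncomputable def Lfun : ℝ → ℝ := fun x => if x = 0 then 1 else Real.log (1 + x) / x

lemma Lfun_tendsto : Tendsto Lfun (𝓝 (0:ℝ)) (𝓝 1) := by
  have h1 : HasDerivAt (fun x : ℝ => Real.log (1 + x)) 1 0 := by
    have := (Real.hasDerivAt_log (by norm_num : (1:ℝ) + 0 ≠ 0)).comp 0
      ((hasDerivAt_id (0:ℝ)).const_add 1)
    simpa [Function.comp_def] using this
  have hs := hasDerivAt_iff_tendsto_slope.mp h1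
  have hpunct : Tendsto Lfun (𝓝[≠] (0:ℝ)) (𝓝 1) := by
    apply hs.congr'
    filter_upwards [eventually_mem_nhdsWithin] with x hx
    simp only [Set.mem_compl_iff, Set.mem_singleton_iff] at hx
    rw [slope_def_field]
    simp [Lfun, hx]
  rw [← nhdsNE_sup_pure (0:ℝ)]
  refine Tendsto.sup hpunct ?_
  have : Tendsto Lfun (pure (0:ℝ)) (𝓝 (Lfun 0)) := tendsto_pure_nhds Lfun 0
  simpa [Lfun] using this

lemma Lfun_id (x : ℝ) : Real.log (1 + x) = Lfun x * x := by
  by_cases hx : x = 0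
  · simp [Lfun, hx]
  · simp only [Lfun, if_neg hx]
    field_simp

section nl
variable {Ω : Type*} [Fintype Ω] {w : Ω → ℝ}

lemma small_pos {M : ℝ} (hM : 0 ≤ M) {ε : ℝ} (hε : |ε| < 1 / (M + 1)) {t : ℝ}
    (ht : |t| ≤ M) : 0 < 1 + ε * t := by
  have h1 : |ε * t| < 1 := by
    rw [abs_mul]
    calc |ε| * |t| ≤ |ε| * M := mul_le_mul_of_nonneg_left ht (abs_nonneg ε)
      _ < (1 / (M + 1)) * (M + 1) := by
          have h1 : |ε| * M ≤ |ε| * (M + 1) := by nlinarith [abs_nonneg ε]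
          have h2 : |ε| * (M + 1) < (1 / (M + 1)) * (M + 1) := by nlinarith
          linarith
      _ = 1 := by field_simp
  nlinarith [neg_lt_of_abs_lt h1]

lemma norm_limit (hw : IsProbWeight w) (r : ℝ) (hr : r ≠ 0) (U : Ω → ℝ)
    (hU0 : fexp w U = 0) {M : ℝ} (hM : 0 ≤ M) (hb : ∀ ω, |U ω| ≤ M) :
    Tendsto (fun ε => Real.log (pnorm w r (fun ω => 1 + ε * U ω)) / ε ^ 2) (𝓝[≠] (0:ℝ))
      (𝓝 ((r - 1) / 2 * fexp w (fun ω => U ω ^ 2))) := by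
  set δ := 1 / (M + 1) with hδdef
  have hδ : 0 < δ := by positivity
  have hevsmall : ∀ᶠ ε in 𝓝 (0:ℝ), |ε| < δ := by
    have := Metric.ball_mem_nhds (0:ℝ) hδ
    filter_upwards [this] with ε hε
    simpa [Real.dist_eq] using hε
  set m : ℝ → ℝ := fun ε => fexp w (fun ω => (1 + ε * U ω) ^ r) with hm
  have claim1 : ∀ ε, m ε - 1 = ∑ ω, w ω * ((1 + ε * U ω) ^ r - (1 + r * (ε * U ω))) := by
    intro ε
    have e : ∀ ω : Ω, w ω * ((1 + ε * U ω) ^ r - (1 + r * (ε * U ω)))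
        = w ω * (1 + ε * U ω) ^ r - w ω - (r * ε) * (w ω * U ω) := fun ω => by ring
    simp only [e]
    rw [Finset.sum_sub_distrib, Finset.sum_sub_distrib, ← Finset.mul_sum]
    have h1 : ∑ ω, w ω * U ω = 0 := hU0
    have h2 : ∑ ω, w ω = 1 := hw.2
    rw [h1, h2]
    simp [m, fexp]
  have claim2 : Tendsto (fun ε => (m ε - 1) / ε ^ 2) (𝓝[≠] (0:ℝ))
      (𝓝 (r * (r - 1) / 2 * fexp w (fun ω => U ω ^ 2))) := by
    have hsum := tendsto_finset_sum (f := fun ω (ε : ℝ) =>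
        w ω * (((1 + ε * U ω) ^ r - (1 + r * (ε * U ω))) / ε ^ 2))
      Finset.univ (fun ω _ => ((key_lim r (U ω)).const_mul (w ω)))
    have heq : ∀ ε : ℝ, (m ε - 1) / ε ^ 2
        = ∑ ω, w ω * (((1 + ε * U ω) ^ r - (1 + r * (ε * U ω))) / ε ^ 2) := by
      intro ε
      rw [claim1, Finset.sum_div]
      exact Finset.sum_congr rfl fun ω _ => (mul_div_assoc _ _ _)
    have hval : ∑ ω, w ω * (r * (r - 1) * U ω ^ 2 / 2)
        = r * (r - 1) / 2 * fexp w (fun ω => U ω ^ 2) := by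
      rw [fexp, Finset.mul_sum]
      exact Finset.sum_congr rfl fun ω _ => by ring
    rw [← hval]
    exact hsum.congr fun ε => (heq ε).symm
  have claim3 : Tendsto (fun ε => m ε - 1) (𝓝[≠] (0:ℝ)) (𝓝 0) := by
    have hp2 : Tendsto (fun ε : ℝ => ε ^ 2) (𝓝[≠] (0:ℝ)) (𝓝 0) := by
      have := (continuous_pow 2).tendsto (0:ℝ)
      simpa using tendsto_nhdsWithin_of_tendsto_nhds this
    have := claim2.mul hp2
    rw [mul_zero] at this
    apply this.congr'
    filter_upwards [eventually_mem_nhdsWithin] with ε hε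
    simp only [Set.mem_compl_iff, Set.mem_singleton_iff] at hε
    field_simp
  have heveq : ∀ᶠ ε in 𝓝[≠] (0:ℝ),
      (1 / r) * (Lfun (m ε - 1) * ((m ε - 1) / ε ^ 2))
        = Real.log (pnorm w r (fun ω => 1 + ε * U ω)) / ε ^ 2 := by
    filter_upwards [nhdsWithin_le_nhds hevsmall] with ε hε
    have hpos : ∀ ω, 0 < 1 + ε * U ω := fun ω => small_pos hM hε (hb ω)
    rw [log_pnorm hw hr hpos]
    have : Real.log (m ε) = Lfun (m ε - 1) * (m ε - 1) := by
      nth_rewrite 1 [show m ε = 1 + (m ε - 1) by ring]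
      exact Lfun_id _
    rw [show (fexp w fun ω => (1 + ε * U ω) ^ r) = m ε from rfl, this]
    ring
  have hfinal := ((Lfun_tendsto.comp claim3).mul claim2).const_mul (1 / r)
  rw [show (1 / r) * (1 * (r * (r - 1) / 2 * fexp w (fun ω => U ω ^ 2)))
      = (r - 1) / 2 * fexp w (fun ω => U ω ^ 2) from by field_simp] at hfinal
  exact hfinal.congr' heveq

lemma norm_limit_zero (hw : IsProbWeight w) (U : Ω → ℝ)
    (hU0 : fexp w U = 0) {M : ℝ} (hM : 0 ≤ M) (hb : ∀ ω, |U ω| ≤ M) :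
    Tendsto (fun ε => Real.log (pnorm w 0 (fun ω => 1 + ε * U ω)) / ε ^ 2) (𝓝[≠] (0:ℝ))
      (𝓝 ((0 - 1) / 2 * fexp w (fun ω => U ω ^ 2))) := by
  set δ := 1 / (M + 1) with hδdef
  have hδ : 0 < δ := by positivity
  have hevsmall : ∀ᶠ ε in 𝓝 (0:ℝ), |ε| < δ := by
    have := Metric.ball_mem_nhds (0:ℝ) hδ
    filter_upwards [this] with ε hε
    simpa [Real.dist_eq] using hε
  have hsum := tendsto_finset_sum (f := fun ω (ε : ℝ) =>
      w ω * ((Real.log (1 + ε * U ω) - ε * U ω) / ε ^ 2))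
    Finset.univ (fun ω _ => ((key_lim_log (U ω)).const_mul (w ω)))
  have hval : ∑ ω, w ω * (-(U ω ^ 2) / 2) = (0 - 1) / 2 * fexp w (fun ω => U ω ^ 2) := by
    rw [fexp, Finset.mul_sum]
    exact Finset.sum_congr rfl fun ω _ => by ring
  rw [← hval]
  apply hsum.congr'
  filter_upwards [nhdsWithin_le_nhds hevsmall] with ε hε
  have hpos : ∀ ω, 0 < 1 + ε * U ω := fun ω => small_pos hM hε (hb ω)
  rw [pnorm_zero_of_pos hpos, Real.log_exp]
  have : fexp w (fun ω => Real.log (1 + ε * U ω))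
      = ∑ ω, w ω * (Real.log (1 + ε * U ω) - ε * U ω) := by
    have e : ∀ ω : Ω, w ω * (Real.log (1 + ε * U ω) - ε * U ω)
        = w ω * Real.log (1 + ε * U ω) - ε * (w ω * U ω) := fun ω => by ring
    rw [fexp]
    simp only [e]
    rw [Finset.sum_sub_distrib, ← Finset.mul_sum]
    have h1 : ∑ ω, w ω * U ω = 0 := hU0
    rw [h1]
    simp
  rw [this, Finset.sum_div]
  exact Finset.sum_congr rfl fun ω _ => (mul_div_assoc _ _ _).symm
end nl

section core
variable {Ω A B : Type*} [Fintype Ω] [Fintype A] [Fintype B] [DecidableEq A]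

lemma core_ineq (w : Ω → ℝ) (hw : IsProbWeight w) (X : Ω → A) (Y : Ω → B)
    (p q : ℝ) (hp : p < 1) (hp0 : p ≠ 0) (hpq : p ≤ q) (hq : q ≤ 1)
    (hrhc : ∀ g : B → ℝ, (∀ b, 0 ≤ g b) →
      pnorm w q (fun ω => g (Y ω))
        ≤ pnorm w p (condExpOn w X (fun ωp => g (Y ωp))))
    (g : B → ℝ) (hg0 : fexp w (fun ω => g (Y ω)) = 0) :
    (q - 1) * fexp w (fun ω => (g (Y ω)) ^ 2)
      ≤ (p - 1) * fexp w (fun ω => (condExpOn w X (fun ωp => g (Y ωp)) ω) ^ 2) := by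
  obtain ⟨ω₀, hω₀⟩ := Finset.exists_ne_zero_of_sum_ne_zero (s := Finset.univ) (f := w)
    (by rw [hw.2]; norm_num)
  have hBne : Nonempty B := ⟨Y ω₀⟩
  set M : ℝ := Finset.univ.sup' (Finset.univ_nonempty) (fun b => |g b|) with hMdef
  have hMg : ∀ b, |g b| ≤ M := fun b => by
    rw [hMdef]; exact Finset.le_sup' (fun b => |g b|) (Finset.mem_univ b)
  have hM : 0 ≤ M := le_trans (abs_nonneg _) (hMg (Y ω₀))
  set T : Ω → ℝ := condExpOn w X (fun ωp => g (Y ωp)) with hTdef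
  have hbY : ∀ ω, |g (Y ω)| ≤ M := fun ω => hMg (Y ω)
  have hbT : ∀ ω, |T ω| ≤ M := condExpOn_bound hw.1 hM hbY
  have hET : fexp w T = 0 := by
    have := tower (X := X) hw.1 (fun _ => (1:ℝ)) (fun ωp => g (Y ωp))
    simp only [one_mul] at this
    rw [this, hg0]
  have limP := norm_limit hw p hp0 T hET hM hbT
  have limQ : Tendsto (fun ε => Real.log (pnorm w q (fun ω => 1 + ε * g (Y ω))) / ε ^ 2)
      (𝓝[≠] (0:ℝ)) (𝓝 ((q - 1) / 2 * fexp w (fun ω => (g (Y ω)) ^ 2))) := by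
    by_cases hq0 : q = 0
    · subst hq0
      simpa using norm_limit_zero hw (fun ω => g (Y ω)) hg0 hM hbY
    · exact norm_limit hw q hq0 (fun ω => g (Y ω)) hg0 hM hbY
  have hev : ∀ᶠ ε in 𝓝[≠] (0:ℝ),
      Real.log (pnorm w q (fun ω => 1 + ε * g (Y ω))) / ε ^ 2
        ≤ Real.log (pnorm w p (fun ω => 1 + ε * T ω)) / ε ^ 2 := by
    have hδ : 0 < 1 / (M + 1) := by positivity
    have hevsmall : ∀ᶠ ε in 𝓝 (0:ℝ), |ε| < 1 / (M + 1) := by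
      filter_upwards [Metric.ball_mem_nhds (0:ℝ) hδ] with ε hε
      simpa [Real.dist_eq] using hε
    filter_upwards [nhdsWithin_le_nhds hevsmall, eventually_mem_nhdsWithin] with ε hε hne
    simp only [Set.mem_compl_iff, Set.mem_singleton_iff] at hne
    have posg : ∀ b, 0 ≤ 1 + ε * g b := fun b => (small_pos hM hε (hMg b)).le
    have h1 : pnorm w q (fun ω => 1 + ε * g (Y ω))
        ≤ pnorm w p (condExpOn w X (fun ωp => 1 + ε * g (Y ωp))) :=
      hrhc (fun b => 1 + ε * g b) posg
    have h2 : pnorm w p (condExpOn w X (fun ωp => 1 + ε * g (Y ωp)))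
        = pnorm w p (fun ω => 1 + ε * T ω) :=
      pnorm_congr_support hw.1 (fun ω hω => condExpOn_affine hw.1 _ ε ω hω)
    rw [h2] at h1
    have hposq : ∀ ω, 0 < 1 + ε * g (Y ω) := fun ω => small_pos hM hε (hbY ω)
    have hlog := Real.log_le_log (pnorm_pos hw hposq) h1
    have hε2 : (0:ℝ) < ε ^ 2 := by positivity
    exact div_le_div_of_nonneg_right hlog hε2.le |>.trans_eq rfl
  have hle := le_of_tendsto_of_tendsto limQ limP hev
  linarith
end core

theorem rhc_implies_maxCorr_sq_bound {Ω A B : Type*} [Fintype Ω] [Fintype A] [Fintype B]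
    [DecidableEq A]
    (w : Ω → ℝ) (hw : IsProbWeight w) (X : Ω → A) (Y : Ω → B)
    (p q : ℝ) (hp : p < 1) (hp0 : p ≠ 0) (hpq : p ≤ q) (hq : q ≤ 1)
    (hrhc : ∀ g : B → ℝ, (∀ b, 0 ≤ g b) →
      pnorm w q (fun ω => g (Y ω))
        ≤ pnorm w p (condExpOn w X (fun ωp => g (Y ωp)))) :
    (maxCorr w X Y)^2 ≤ (q - 1) / (p - 1) := by
  set c : ℝ := (q - 1) / (p - 1) with hcdef
  have hc : 0 ≤ c := div_nonneg_of_nonpos (by linarith) (by linarith)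
  set S := { r : ℝ | ∃ f : A → ℝ, ∃ g : B → ℝ,
    fexp w (fun ω => f (X ω)) = 0 ∧ fexp w (fun ω => g (Y ω)) = 0 ∧
    fexp w (fun ω => (f (X ω))^2) ≤ 1 ∧ fexp w (fun ω => (g (Y ω))^2) ≤ 1 ∧
    r = fexp w (fun ω => f (X ω) * g (Y ω)) } with hSdef
  have h0S : (0:ℝ) ∈ S := by
    refine ⟨fun _ => 0, fun _ => 0, ?_, ?_, ?_, ?_, ?_⟩ <;> simp [fexp]
  have hub : ∀ r ∈ S, r ≤ Real.sqrt c := by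
    rintro r ⟨f, g, hf0, hg0, hf2, hg2, hr⟩
    set T : Ω → ℝ := condExpOn w X (fun ωp => g (Y ωp)) with hTdef
    have hcore := core_ineq w hw X Y p q hp hp0 hpq hq hrhc g hg0
    have htow := tower (X := X) hw.1 f (fun ωp => g (Y ωp))
    have hCS := Finset.sum_mul_sq_le_sq_mul_sq Finset.univ
      (fun ω => Real.sqrt (w ω) * f (X ω)) (fun ω => Real.sqrt (w ω) * T ω)
    have e1 : ∀ ω : Ω, (Real.sqrt (w ω) * f (X ω)) * (Real.sqrt (w ω) * T ω)
        = w ω * (f (X ω) * T ω) := fun ω => by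
      rw [show (Real.sqrt (w ω) * f (X ω)) * (Real.sqrt (w ω) * T ω)
          = (Real.sqrt (w ω) * Real.sqrt (w ω)) * (f (X ω) * T ω) from by ring,
        Real.mul_self_sqrt (hw.1 ω)]
    have e2 : ∀ ω : Ω, (Real.sqrt (w ω) * f (X ω)) ^ 2 = w ω * (f (X ω)) ^ 2 := fun ω => by
      rw [mul_pow, Real.sq_sqrt (hw.1 ω)]
    have e3 : ∀ ω : Ω, (Real.sqrt (w ω) * T ω) ^ 2 = w ω * (T ω) ^ 2 := fun ω => by
      rw [mul_pow, Real.sq_sqrt (hw.1 ω)]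
    simp only [e1, e2, e3] at hCS
    -- hCS : (∑ ω, w ω * (f (X ω) * T ω))^2 ≤ (∑ w f²) * (∑ w T²)
    have hrT : r = fexp w (fun ω => f (X ω) * T ω) := by rw [hr, ← htow]
    have hr2 : r ^ 2 ≤ c := by
      have hEf2 : (0:ℝ) ≤ fexp w (fun ω => (f (X ω)) ^ 2) :=
        Finset.sum_nonneg fun ω _ => mul_nonneg (hw.1 ω) (sq_nonneg _)
      have hEg2 : (0:ℝ) ≤ fexp w (fun ω => (g (Y ω)) ^ 2) :=
        Finset.sum_nonneg fun ω _ => mul_nonneg (hw.1 ω) (sq_nonneg _)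
      have hET2 : (0:ℝ) ≤ fexp w (fun ω => (T ω) ^ 2) :=
        Finset.sum_nonneg fun ω _ => mul_nonneg (hw.1 ω) (sq_nonneg _)
      have hcp : c * (p - 1) = q - 1 := div_mul_cancel₀ _ (by linarith : p - 1 ≠ 0)
      have hTle : fexp w (fun ω => (T ω) ^ 2) ≤ c * fexp w (fun ω => (g (Y ω)) ^ 2) := by
        nlinarith [hcore]
      have hCS' : r ^ 2 ≤ fexp w (fun ω => (f (X ω)) ^ 2) * fexp w (fun ω => (T ω) ^ 2) := by
        rw [hrT]
        exact hCS
      nlinarith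
    calc r ≤ |r| := le_abs_self r
      _ = Real.sqrt (r ^ 2) := (Real.sqrt_sq_eq_abs r).symm
      _ ≤ Real.sqrt c := Real.sqrt_le_sqrt hr2
  have hne : S.Nonempty := ⟨0, h0S⟩
  have hbdd : BddAbove S := ⟨Real.sqrt c, fun r hr => hub r hr⟩
  have h1 : sSup S ≤ Real.sqrt c := csSup_le hne hub
  have h2 : 0 ≤ sSup S := le_csSup hbdd h0S
  have : maxCorr w X Y = sSup S := rfl
  rw [this]
  calc (sSup S) ^ 2 ≤ (Real.sqrt c) ^ 2 := by
        exact pow_le_pow_left₀ h2 h1 2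
    _ = c := Real.sq_sqrt hc
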